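/- Let L and S be independent non-negative random variables with L \in RV_{-\beta}, S \in RV_{-\beta} for \beta > 0, and suppose \bar{F}_S(x)/\bar{F}_L(x) \to k as x \to \infty for some k \ge 0. Then VaR_\alpha(L+S) \sim (1+k)^{1/\beta} VaR_\alpha(L) as \alpha \to 1. -/

import Mathlib

open MeasureTheory ProbabilityTheory Filter Topology

/-- Tail probability function of a random variable. -/
noncomputable def tail {Ω : Type*} [MeasurableSpace Ω] (P : Measure Ω) (X : Ω → ℝ) (x : ℝ) : ℝ :=
  (P {ω | x < X ω}).toReal

/-- Distribution function of a random variable. -/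
noncomputable def cdf' {Ω : Type*} [MeasurableSpace Ω] (P : Measure Ω) (X : Ω → ℝ) (x : ℝ) : ℝ :=
  (P {ω | X ω ≤ x}).toReal

/-- Value at Risk: the α-quantile. -/
noncomputable def VaR {Ω : Type*} [MeasurableSpace Ω] (P : Measure Ω) (X : Ω → ℝ) (α : ℝ) : ℝ :=
  sInf {x : ℝ | α ≤ cdf' P X x}

/-- f is regularly varying (at infinity) with index k. -/
def RegVary (f : ℝ → ℝ) (k : ℝ) : Prop :=
  ∀ t : ℝ, 0 < t → Tendsto (fun x => f (t * x) / f x) atTop (𝓝 (t ^ k))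

section helpers
variable {Ω : Type*} [MeasurableSpace Ω] (P : Measure Ω) [IsProbabilityMeasure P]

omit [IsProbabilityMeasure P] in
lemma tail_nonneg (X : Ω → ℝ) (x : ℝ) : 0 ≤ tail P X x := ENNReal.toReal_nonneg

lemma tail_le_one (X : Ω → ℝ) (x : ℝ) : tail P X x ≤ 1 := by
  unfold tail
  rw [← ENNReal.toReal_one]
  exact ENNReal.toReal_mono ENNReal.one_ne_top prob_le_one

lemma tail_anti (X : Ω → ℝ) : Antitone (tail P X) := fun a b hab => by
  unfold tail
  exact ENNReal.toReal_mono (measure_ne_top P _)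
    (measure_mono (fun ω h => lt_of_le_of_lt hab h))

lemma tail_eq_one (X : Ω → ℝ) (hX : ∀ ω, 0 ≤ X ω) {x : ℝ} (hx : x < 0) : tail P X x = 1 := by
  unfold tail
  have h : {ω : Ω | x < X ω} = Set.univ :=
    Set.eq_univ_of_forall fun ω => lt_of_lt_of_le hx (hX ω)
  rw [h, measure_univ, ENNReal.toReal_one]

lemma tail_tendsto_zero (X : Ω → ℝ) (hX : Measurable X) :
    Tendsto (tail P X) atTop (𝓝 0) := by
  have hnat : Tendsto (fun n : ℕ => P {ω | (n : ℝ) < X ω}) atTop (𝓝 0) := by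
    have h := tendsto_measure_iInter_atTop (μ := P)
      (s := fun n : ℕ => {ω | (n : ℝ) < X ω})
      (fun n => (hX measurableSet_Ioi).nullMeasurableSet)
      (fun m n hmn => fun ω (h : (n:ℝ) < X ω) => lt_of_le_of_lt (by exact_mod_cast hmn) h)
      ⟨0, measure_ne_top P _⟩
    have hempty : (⋂ n : ℕ, {ω | (n : ℝ) < X ω}) = ∅ := by
      ext ω
      simp only [Set.mem_iInter, Set.mem_setOf_eq, Set.mem_empty_iff_false, iff_false, not_forall,
        not_lt]
      obtain ⟨n, hn⟩ := exists_nat_ge (X ω)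
      exact ⟨n, hn⟩
    rw [hempty, measure_empty] at h
    exact h
  have hnatR : Tendsto (fun n : ℕ => tail P X n) atTop (𝓝 0) := by
    have := (ENNReal.tendsto_toReal (by simp) : Tendsto ENNReal.toReal (𝓝 0) (𝓝 0)).comp hnat
    simpa [tail, Function.comp_def] using this
  rw [Metric.tendsto_atTop] at hnatR ⊢
  intro ε hε
  obtain ⟨N, hN⟩ := hnatR ε hε
  refine ⟨N, fun x hx => ?_⟩
  have h1 := hN N le_rfl
  have h2 : tail P X x ≤ tail P X N := tail_anti P X hx
  rw [Real.dist_eq, sub_zero] at h1 ⊢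
  rw [abs_of_nonneg (tail_nonneg P X _)] at h1 ⊢
  exact lt_of_le_of_lt h2 h1

lemma tail_pos_of_RV (X : Ω → ℝ) {β : ℝ}
    (hRV : ∀ t : ℝ, 0 < t → Tendsto (fun x => tail P X (t * x) / tail P X x) atTop (𝓝 (t ^ (-β))))
    (x : ℝ) : 0 < tail P X x := by
  rcases lt_or_eq_of_le (tail_nonneg P X x) with h | h
  · exact h
  exfalso
  have hzero : ∀ y, x ≤ y → tail P X y = 0 := fun y hy =>
    le_antisymm (h ▸ tail_anti P X hy) (tail_nonneg P X y)
  have h2 := hRV 2 two_pos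
  have hev : (fun y => tail P X (2 * y) / tail P X y) =ᶠ[atTop] (fun _ => (0:ℝ)) := by
    filter_upwards [eventually_ge_atTop x] with y hy
    simp [hzero y hy]
  have h3 : Tendsto (fun _ : ℝ => (0:ℝ)) atTop (𝓝 ((2:ℝ) ^ (-β))) := h2.congr' hev
  have h4 := tendsto_nhds_unique h3 tendsto_const_nhds
  have hpos : (0:ℝ) < (2:ℝ) ^ (-β) := Real.rpow_pos_of_pos two_pos _
  rw [h4] at hpos
  exact lt_irrefl _ hpos

lemma cdf'_eq (X : Ω → ℝ) (hX : Measurable X) (x : ℝ) :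
    cdf' P X x = 1 - tail P X x := by
  have h : {ω | X ω ≤ x} = {ω : Ω | x < X ω}ᶜ := by ext ω; simp [not_lt]
  have hms : MeasurableSet {ω : Ω | x < X ω} := hX measurableSet_Ioi
  rw [cdf', tail, h, measure_compl hms (measure_ne_top P _), measure_univ,
    ENNReal.toReal_sub_of_le prob_le_one ENNReal.one_ne_top, ENNReal.toReal_one]

lemma VaR_eq (X : Ω → ℝ) (hX : Measurable X) (α : ℝ) :
    VaR P X α = sInf {x : ℝ | tail P X x ≤ 1 - α} := by
  unfold VaR
  congr 1
  ext x
  rw [Set.mem_setOf_eq, Set.mem_setOf_eq, cdf'_eq P X hX]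
  constructor <;> intro h <;> linarith

variable (L S : Ω → ℝ) (hL : Measurable L) (hS : Measurable S) (hindep : IndepFun L S P)

include hindep in
lemma indep_tail_prod (a b : ℝ) :
    (P ({ω | a < L ω} ∩ {ω | b < S ω})).toReal = tail P L a * tail P S b := by
  have h := hindep.measure_inter_preimage_eq_mul (s := Set.Ioi a) (t := Set.Ioi b)
    measurableSet_Ioi measurableSet_Ioi
  have h2 : {ω | a < L ω} = L ⁻¹' Set.Ioi a := rfl
  have h3 : {ω | b < S ω} = S ⁻¹' Set.Ioi b := rfl
  rw [tail, tail, h2, h3, h, ENNReal.toReal_mul]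

include hindep hS in
lemma tail_sum_lower (hLpos : ∀ ω, 0 ≤ L ω) (hSpos : ∀ ω, 0 ≤ S ω) (x : ℝ) :
    tail P L x + tail P S x - tail P L x * tail P S x ≤ tail P (fun ω => L ω + S ω) x := by
  set A := {ω | x < L ω} with hA
  set B := {ω | x < S ω} with hB
  have hprod : (P (A ∩ B)).toReal = tail P L x * tail P S x :=
    indep_tail_prod P L S hindep x x
  have hunion : P (A ∪ B) + P (A ∩ B) = P A + P B :=
    measure_union_add_inter A (hS measurableSet_Ioi)
  have hfin : ∀ s : Set Ω, P s ≠ ⊤ := fun s => measure_ne_top P s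
  have htr : (P (A ∪ B)).toReal + (P (A ∩ B)).toReal = (P A).toReal + (P B).toReal := by
    rw [← ENNReal.toReal_add (hfin _) (hfin _), ← ENNReal.toReal_add (hfin _) (hfin _), hunion]
  have hsub : A ∪ B ⊆ {ω | x < L ω + S ω} := by
    rintro ω (h | h)
    · exact lt_of_lt_of_le h (le_add_of_nonneg_right (hSpos ω))
    · exact lt_of_lt_of_le h (le_add_of_nonneg_left (hLpos ω))
  have hmono : (P (A ∪ B)).toReal ≤ tail P (fun ω => L ω + S ω) x :=
    ENNReal.toReal_mono (hfin _) (measure_mono hsub)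
  have hLx : tail P L x = (P A).toReal := rfl
  have hSx : tail P S x = (P B).toReal := rfl
  linarith

include hindep in
lemma tail_sum_upper (c δ : ℝ) (hcδ : c + δ = 1) (x : ℝ) :
    tail P (fun ω => L ω + S ω) x ≤
      tail P L (c * x) + tail P S (c * x) + tail P L (δ * x) * tail P S (δ * x) := by
  set A := {ω | c * x < L ω}
  set B := {ω | c * x < S ω}
  set C := {ω | δ * x < L ω} ∩ {ω | δ * x < S ω} with hC
  have hx : c * x + δ * x = x := by rw [← add_mul, hcδ, one_mul]
  have hsub : {ω | x < L ω + S ω} ⊆ A ∪ B ∪ C := by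
    intro ω h
    have h' : x < L ω + S ω := h
    by_cases hA : c * x < L ω
    · exact Set.mem_union_left _ (Set.mem_union_left _ hA)
    by_cases hB : c * x < S ω
    · exact Set.mem_union_left _ (Set.mem_union_right _ hB)
    push_neg at hA hB
    exact Set.mem_union_right _
      ⟨show δ * x < L ω by linarith, show δ * x < S ω by linarith⟩
  have hfin : ∀ s : Set Ω, P s ≠ ⊤ := fun s => measure_ne_top P s
  have h1 : P {ω | x < L ω + S ω} ≤ P A + P B + P C :=
    le_trans (measure_mono hsub) (le_trans (measure_union_le _ _)
      (add_le_add_left (measure_union_le _ _) _))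
  have h2 : tail P (fun ω => L ω + S ω) x ≤ (P A).toReal + (P B).toReal + (P C).toReal := by
    have := ENNReal.toReal_mono (by finiteness) h1
    rwa [ENNReal.toReal_add (by finiteness) (by finiteness),
      ENNReal.toReal_add (hfin _) (hfin _)] at this
  have hprod : (P C).toReal = tail P L (δ * x) * tail P S (δ * x) :=
    indep_tail_prod P L S hindep _ _
  have hLx : tail P L (c*x) = (P A).toReal := rfl
  have hSx : tail P S (c*x) = (P B).toReal := rfl
  linarith

include hS hindep in
lemma tail_sum_ratio_tendsto
    (hLpos : ∀ ω, 0 ≤ L ω) (hSpos : ∀ ω, 0 ≤ S ω)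
    {β k : ℝ} (hβ : 0 < β) (hk0 : 0 ≤ k)
    (hRVL : ∀ t : ℝ, 0 < t →
      Tendsto (fun x => tail P L (t * x) / tail P L x) atTop (𝓝 (t ^ (-β))))
    (hfLpos : ∀ x, 0 < tail P L x)
    (hk : Tendsto (fun x => tail P S x / tail P L x) atTop (𝓝 k)) :
    Tendsto (fun x => tail P (fun ω => L ω + S ω) x / tail P L x) atTop (𝓝 (1 + k)) := by
  rw [Metric.tendsto_nhds]
  intro ε hε
  have h1k : (0:ℝ) < 1 + k := by linarith
  set b : ℝ := (1 + k) / (1 + k + ε / 2) with hb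
  have hb0 : 0 < b := by positivity
  have hb1 : b < 1 := by rw [hb, div_lt_one (by linarith)]; linarith
  set c : ℝ := b ^ (1/β) with hc
  have hc0 : 0 < c := Real.rpow_pos_of_pos hb0 _
  have hc1 : c < 1 := by
    calc c < 1 ^ (1/β) := Real.rpow_lt_rpow (le_of_lt hb0) hb1 (by positivity)
    _ = 1 := Real.one_rpow _
  set δ : ℝ := 1 - c with hδ
  have hδ0 : 0 < δ := by rw [hδ]; linarith
  have hcδ : c + δ = 1 := by rw [hδ]; ring
  have hcβ : c ^ (-β) = (1 + k + ε / 2) / (1 + k) := by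
    rw [hc, ← Real.rpow_mul hb0.le]
    have : 1 / β * (-β) = -1 := by field_simp
    rw [this, Real.rpow_neg_one, hb, inv_div]
  set u : ℝ → ℝ := fun x => tail P L (c * x) / tail P L x + tail P S (c * x) / tail P L x +
    (tail P L (δ * x) / tail P L x) * tail P S (δ * x) with hu_def
  have hcomp_c : Tendsto (fun x : ℝ => c * x) atTop atTop :=
    Tendsto.const_mul_atTop hc0 tendsto_id
  have hcomp_δ : Tendsto (fun x : ℝ => δ * x) atTop atTop :=
    Tendsto.const_mul_atTop hδ0 tendsto_id
  have t1 := hRVL c hc0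
  have t2 : Tendsto (fun x => tail P S (c * x) / tail P L x) atTop (𝓝 (k * c ^ (-β))) := by
    have h := (hk.comp hcomp_c).mul t1
    apply h.congr
    intro x
    have hne : tail P L (c * x) ≠ 0 := (hfLpos (c * x)).ne'
    simp only [Function.comp_apply]
    field_simp
  have t3 : Tendsto (fun x => (tail P L (δ * x) / tail P L x) * tail P S (δ * x)) atTop
      (𝓝 (δ ^ (-β) * 0)) :=
    (hRVL δ hδ0).mul ((tail_tendsto_zero P S hS).comp hcomp_δ)
  have hu : Tendsto u atTop (𝓝 (1 + k + ε / 2)) := by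
    have h := (t1.add t2).add t3
    have heq : c ^ (-β) + k * c ^ (-β) + δ ^ (-β) * 0 = 1 + k + ε / 2 := by
      rw [hcβ]; field_simp; ring
    rwa [heq] at h
  set l : ℝ → ℝ := fun x => 1 + tail P S x / tail P L x - tail P S x with hl_def
  have hl : Tendsto l atTop (𝓝 (1 + k)) := by
    have h := (tendsto_const_nhds (x := (1:ℝ)).add hk).sub (tail_tendsto_zero P S hS)
    simpa using h
  have hub : ∀ x, tail P (fun ω => L ω + S ω) x / tail P L x ≤ u x := by
    intro x
    have h := tail_sum_upper P L S hindep c δ hcδ x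
    have h2 : tail P (fun ω => L ω + S ω) x / tail P L x ≤
        (tail P L (c * x) + tail P S (c * x) + tail P L (δ * x) * tail P S (δ * x)) /
          tail P L x := by gcongr; exact (hfLpos x).le
    refine h2.trans_eq ?_
    have hne := (hfLpos x).ne'
    rw [hu_def]
    field_simp
  have hlb : ∀ x, l x ≤ tail P (fun ω => L ω + S ω) x / tail P L x := by
    intro x
    have h := tail_sum_lower P L S hS hindep hLpos hSpos x
    have h2 : (tail P L x + tail P S x - tail P L x * tail P S x) / tail P L x ≤
        tail P (fun ω => L ω + S ω) x / tail P L x := by gcongr; exact (hfLpos x).le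
    refine le_trans (le_of_eq ?_) h2
    have hne := (hfLpos x).ne'
    rw [hl_def]
    field_simp
  have hu' : ∀ᶠ x in atTop, u x < 1 + k + ε := hu.eventually_lt_const (by linarith)
  have hl' : ∀ᶠ x in atTop, 1 + k - ε < l x := hl.eventually_const_lt (by linarith)
  filter_upwards [hu', hl'] with x h1' h2'
  have hA : tail P (fun ω => L ω + S ω) x / tail P L x < 1 + k + ε := (hub x).trans_lt h1'
  have hB : 1 + k - ε < tail P (fun ω => L ω + S ω) x / tail P L x := h2'.trans_le (hlb x)
  rw [Real.dist_eq, abs_sub_lt_iff]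
  constructor
  · linarith
  · linarith

end helpers

theorem stmt8 {Ω : Type*} [MeasurableSpace Ω] (P : Measure Ω) [IsProbabilityMeasure P]
    (L S : Ω → ℝ) (hL : Measurable L) (hS : Measurable S)
    (hindep : IndepFun L S P)
    (hLpos : ∀ ω, 0 ≤ L ω) (hSpos : ∀ ω, 0 ≤ S ω)
    (β k : ℝ) (hβ : 0 < β) (hk0 : 0 ≤ k)
    (hRVL : RegVary (tail P L) (-β)) (hRVS : RegVary (tail P S) (-β))
    (hk : Tendsto (fun x => tail P S x / tail P L x) atTop (𝓝 k)) :
    Tendsto (fun α => VaR P (fun ω => L ω + S ω) α / ((1 + k) ^ (1 / β) * VaR P L α))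
      (𝓝[<] (1 : ℝ)) (𝓝 1) := by
  have hLS : Measurable (fun ω => L ω + S ω) := hL.add hS
  have hLSpos : ∀ ω, 0 ≤ L ω + S ω := fun ω => add_nonneg (hLpos ω) (hSpos ω)
  have hfLpos : ∀ x, 0 < tail P L x := tail_pos_of_RV P L hRVL
  have h1k : (0:ℝ) < 1 + k := by linarith
  set γ : ℝ := (1 + k) ^ (1 / β) with hγ_def
  have hγ0 : 0 < γ := Real.rpow_pos_of_pos h1k _
  have hγβ : γ ^ (-β) = (1 + k)⁻¹ := by
    rw [hγ_def, ← Real.rpow_mul h1k.le]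
    have : 1 / β * (-β) = -1 := by field_simp
    rw [this, Real.rpow_neg_one]
  have hsum := tail_sum_ratio_tendsto P L S hS hindep hLpos hSpos hβ hk0 hRVL hfLpos hk
  -- VaR of L tends to infinity
  have hVaRL_top : Tendsto (fun α => VaR P L α) (𝓝[<] (1:ℝ)) atTop := by
    rw [tendsto_atTop]
    intro M
    have hm : max (1 - tail P L M) (1/2) < 1 := by
      apply max_lt _ (by norm_num)
      have := hfLpos M
      linarith
    have hIoo : Set.Ioo (max (1 - tail P L M) (1/2)) 1 ∈ 𝓝[<] (1:ℝ) :=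
      Ioo_mem_nhdsLT_of_mem ⟨hm, le_refl 1⟩
    filter_upwards [hIoo] with α hα
    obtain ⟨hα1, hα2⟩ := hα
    have hα0 : (0:ℝ) < α := lt_of_le_of_lt (by norm_num) (lt_of_le_of_lt (le_max_right _ _) hα1)
    have hαM : 1 - α < tail P L M := by
      have := lt_of_le_of_lt (le_max_left _ _) hα1
      linarith
    rw [VaR_eq P L hL]
    apply le_csInf
    · obtain ⟨x, hx⟩ := ((tail_tendsto_zero P L hL).eventually_lt_const
        (show (0:ℝ) < 1 - α by linarith)).exists
      exact ⟨x, hx.le⟩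
    · intro x hx
      by_contra hcon
      push_neg at hcon
      have : tail P L M ≤ tail P L x := tail_anti P L hcon.le
      have hx' : tail P L x ≤ 1 - α := hx
      linarith
  -- main argument
  rw [Metric.tendsto_nhds]
  intro ε hε
  set t : ℝ := γ * (1 + ε / 2) with ht_def
  set s : ℝ := γ / (1 + ε / 2) with hs_def
  have hε2 : (1:ℝ) < 1 + ε / 2 := by linarith
  have ht0 : 0 < t := by positivity
  have hs0 : 0 < s := by positivity
  -- eventual tail comparison
  have hgt : ∀ᶠ x in atTop, tail P (fun ω => L ω + S ω) (t * x) < tail P L x := by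
    have hcomp : Tendsto (fun x : ℝ => t * x) atTop atTop :=
      Tendsto.const_mul_atTop ht0 tendsto_id
    have hlim : Tendsto (fun x => tail P (fun ω => L ω + S ω) (t * x) / tail P L x) atTop
        (𝓝 ((1 + k) * t ^ (-β))) := by
      have h := (hsum.comp hcomp).mul (hRVL t ht0)
      apply h.congr
      intro x
      have hne : tail P L (t * x) ≠ 0 := (hfLpos (t * x)).ne'
      simp only [Function.comp_apply]
      field_simp
    have hbound : (1 + k) * t ^ (-β) < 1 := by
      rw [ht_def, Real.mul_rpow hγ0.le (by linarith), hγβ]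
      have h2 : (1 + ε / 2 : ℝ) ^ (-β) < 1 :=
        Real.rpow_lt_one_of_one_lt_of_neg hε2 (by linarith)
      calc (1 + k) * ((1 + k)⁻¹ * (1 + ε / 2) ^ (-β))
          = (1 + ε / 2) ^ (-β) := by field_simp
        _ < 1 := h2
    filter_upwards [hlim.eventually_lt_const hbound] with x hx
    exact (div_lt_one (hfLpos x)).mp hx
  have hlt : ∀ᶠ x in atTop, tail P L x < tail P (fun ω => L ω + S ω) (s * x) := by
    have hcomp : Tendsto (fun x : ℝ => s * x) atTop atTop :=
      Tendsto.const_mul_atTop hs0 tendsto_id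
    have hlim : Tendsto (fun x => tail P (fun ω => L ω + S ω) (s * x) / tail P L x) atTop
        (𝓝 ((1 + k) * s ^ (-β))) := by
      have h := (hsum.comp hcomp).mul (hRVL s hs0)
      apply h.congr
      intro x
      have hne : tail P L (s * x) ≠ 0 := (hfLpos (s * x)).ne'
      simp only [Function.comp_apply]
      field_simp
    have hbound : 1 < (1 + k) * s ^ (-β) := by
      rw [hs_def, div_eq_mul_inv, Real.mul_rpow hγ0.le (by positivity), hγβ,
        ← Real.rpow_neg_one (1 + ε / 2), ← Real.rpow_mul (by positivity : (0:ℝ) ≤ 1 + ε / 2)]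
      have hexp : (-1 : ℝ) * (-β) = β := by ring
      rw [hexp]
      have heq : (1 + k) * ((1 + k)⁻¹ * (1 + ε / 2) ^ β) = (1 + ε / 2) ^ β := by
        field_simp
      rw [heq]
      exact (Real.one_lt_rpow_iff_of_pos (by positivity)).mpr (Or.inl ⟨hε2, hβ⟩)
    filter_upwards [hlim.eventually_const_lt hbound] with x hx
    exact (one_lt_div (hfLpos x)).mp hx
  obtain ⟨U₀, hU₀⟩ := eventually_atTop.mp (hgt.and hlt)
  set U : ℝ := max U₀ 1 with hU_def
  have hU1 : (1:ℝ) ≤ U := le_max_right _ _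
  have hUprop : ∀ x, U ≤ x →
      tail P (fun ω => L ω + S ω) (t * x) < tail P L x ∧
      tail P L x < tail P (fun ω => L ω + S ω) (s * x) :=
    fun x hx => hU₀ x (le_trans (le_max_left _ _) hx)
  -- eventually in α
  have hm : max (1 - tail P L U) (1/2) < 1 := by
    apply max_lt _ (by norm_num)
    have := hfLpos U
    linarith
  have hIoo : Set.Ioo (max (1 - tail P L U) (1/2)) 1 ∈ 𝓝[<] (1:ℝ) :=
    Ioo_mem_nhdsLT_of_mem ⟨hm, le_refl 1⟩
  filter_upwards [hIoo, hVaRL_top.eventually (eventually_ge_atTop U)] with α hα hTU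
  obtain ⟨hα1, hα2⟩ := hα
  have hα0 : (0:ℝ) < α := lt_of_le_of_lt (by norm_num) (lt_of_le_of_lt (le_max_right _ _) hα1)
  have hαU : 1 - α < tail P L U := by
    have := lt_of_le_of_lt (le_max_left _ _) hα1
    linarith
  set T : ℝ := VaR P L α with hT_def
  set V : ℝ := VaR P (fun ω => L ω + S ω) α with hV_def
  have hT1 : 1 ≤ T := le_trans hU1 hTU
  have hT0 : 0 < T := lt_of_lt_of_le one_pos hT1
  -- set descriptions
  have hALeq : VaR P L α = sInf {x : ℝ | tail P L x ≤ 1 - α} := VaR_eq P L hL α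
  have hAgeq : VaR P (fun ω => L ω + S ω) α =
      sInf {x : ℝ | tail P (fun ω => L ω + S ω) x ≤ 1 - α} := VaR_eq P _ hLS α
  set AL : Set ℝ := {x : ℝ | tail P L x ≤ 1 - α} with hAL_def
  set Ag : Set ℝ := {x : ℝ | tail P (fun ω => L ω + S ω) x ≤ 1 - α} with hAg_def
  have hbdd : ∀ (X : Ω → ℝ), (∀ ω, 0 ≤ X ω) → BddBelow {x : ℝ | tail P X x ≤ 1 - α} := by
    intro X hX
    refine ⟨0, fun x hx => ?_⟩
    by_contra hcon
    push_neg at hcon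
    have := tail_eq_one P X hX hcon
    have hx' : tail P X x ≤ 1 - α := hx
    rw [this] at hx'
    linarith
  have hAL_bdd : BddBelow AL := hbdd L hLpos
  have hAg_bdd : BddBelow Ag := hbdd _ hLSpos
  have hne : ∀ (X : Ω → ℝ), Measurable X → Set.Nonempty {x : ℝ | tail P X x ≤ 1 - α} := by
    intro X hX
    obtain ⟨x, hx⟩ := ((tail_tendsto_zero P X hX).eventually_lt_const
      (show (0:ℝ) < 1 - α by linarith)).exists
    exact ⟨x, hx.le⟩
  have hAL_ne : AL.Nonempty := hne L hL
  have hAg_ne : Ag.Nonempty := hne _ hLS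
  -- upper bound : V ≤ t * T
  have hupper : V ≤ t * T := by
    apply le_of_forall_gt_imp_ge_of_dense
    intro y hy
    have hyt : T < y / t := by
      rw [lt_div_iff₀ ht0]
      linarith [mul_comm t T]
    obtain ⟨x, hx, hxy⟩ := exists_lt_of_csInf_lt hAL_ne (by rw [← hALeq, ← hT_def]; exact hyt)
    have hxT : T ≤ x := by rw [hT_def, hALeq]; exact csInf_le hAL_bdd hx
    have hxU : U ≤ x := le_trans hTU hxT
    have h1 := (hUprop x hxU).1
    have hmem : t * x ∈ Ag := le_trans h1.le hx
    have hVle : V ≤ t * x := by rw [hV_def, hAgeq]; exact csInf_le hAg_bdd hmem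
    refine le_of_lt ?_
    calc V ≤ t * x := hVle
      _ < t * (y / t) := by exact mul_lt_mul_of_pos_left hxy ht0
      _ = y := by field_simp
  -- lower bound : s * T ≤ V
  have hlower : s * T ≤ V := by
    rw [hV_def, hAgeq]
    apply le_csInf hAg_ne
    intro x hx
    by_contra hcon
    push_neg at hcon
    have hxg : tail P (fun ω => L ω + S ω) x ≤ 1 - α := hx
    set u : ℝ := x / s with hu_def
    have hxu : x = s * u := by rw [hu_def]; field_simp
    have huT : u < T := by
      rw [hu_def, div_lt_iff₀ hs0]
      calc x < s * T := hcon
        _ = T * s := mul_comm _ _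
    by_cases hcase : U ≤ u
    · have h2 := (hUprop u hcase).2
      have hnotmem : u ∉ AL := by
        rw [hT_def, hALeq] at huT
        exact notMem_of_lt_csInf huT hAL_bdd
      have h3 : 1 - α < tail P L u := lt_of_not_ge hnotmem
      rw [← hxu] at h2
      linarith
    · push_neg at hcase
      have hxsU : x < s * U := by
        rw [hxu]
        exact mul_lt_mul_of_pos_left hcase hs0
      have h4 : tail P (fun ω => L ω + S ω) (s * U) ≤ tail P (fun ω => L ω + S ω) x :=
        tail_anti P _ hxsU.le
      have h5 := (hUprop U (le_refl U)).2
      linarith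
  -- conclude
  have hγT : 0 < γ * T := by positivity
  have hfrac_up : V / (γ * T) ≤ 1 + ε / 2 := by
    rw [div_le_iff₀ hγT]
    calc V ≤ t * T := hupper
      _ = (1 + ε / 2) * (γ * T) := by rw [ht_def]; ring
  have hfrac_lo : (1 + ε / 2)⁻¹ ≤ V / (γ * T) := by
    rw [le_div_iff₀ hγT]
    calc (1 + ε / 2)⁻¹ * (γ * T) = s * T := by rw [hs_def]; field_simp
      _ ≤ V := hlower
  have hinv : 1 - ε < (1 + ε / 2)⁻¹ := by
    have hz : (0:ℝ) < (1 + ε / 2)⁻¹ := by positivity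
    have hmul : (1 + ε / 2) * (1 + ε / 2)⁻¹ = 1 := mul_inv_cancel₀ (by linarith)
    nlinarith
  rw [Real.dist_eq, abs_sub_lt_iff]
  constructor
  · linarith
  · linarith
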